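/- Let N and t be positive integers with t ≤ N, and let m ∈ ℝ^N have nonnegative entries arranged in nondecreasing order (m[1] ≤ m[2] ≤ ⋯ ≤ m[N]). Let t' = Σ_{n=1}^{N} m[n], let N' be the number of indices n with m[n] > 0, and let e be the number of indices n with t·m[n] = t'. Suppose t·m[n] ≤ t' for all n, N' ≥ t+1, e ≤ t−1, and additionally t'/t − m[N−t+1] < m[N−N'+1] (the iteration is a partial fill). Set α = t'/t − m[N−t+1], define m' ∈ ℝ^N by m'[n] = m[n] − α for n = N−N'+1 and for n ∈ {N−t+2, …, N}, and m'[n] = m[n] otherwise, and set t'' = t' − t·α. Then the number of indices n with t·m'[n] = t'' is at least e + 1. -/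

import Mathlib

theorem stmt_9 (N t : ℕ) (ht : 0 < t) (htN : t ≤ N)
    (m : Fin N → ℝ) (hm : ∀ n, 0 ≤ m n) (hmono : Monotone m)
    (t' : ℝ) (ht' : t' = ∑ n, m n)
    (N' : ℕ) (hN' : N' = (Finset.univ.filter (fun n => 0 < m n)).card)
    (e : ℕ) (he : e = (Finset.univ.filter (fun n => (t : ℝ) * m n = t')).card)
    (hcond : ∀ n, (t : ℝ) * m n ≤ t')
    (hN'big : t + 1 ≤ N')
    (hePF : e ≤ t - 1)
    (hPF : t' / t - m ⟨N - t, by omega⟩ < m ⟨N - N', by omega⟩)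
    (α : ℝ) (hα : α = t' / t - m ⟨N - t, by omega⟩)
    (m' : Fin N → ℝ)
    (hm' : ∀ n : Fin N,
      m' n = if (n : ℕ) = N - N' ∨ N - t + 1 ≤ (n : ℕ) then m n - α else m n)
    (t'' : ℝ) (ht'' : t'' = t' - t * α) :
    e + 1 ≤ (Finset.univ.filter (fun n => (t : ℝ) * m' n = t'')).card := by
  have htR : (0:ℝ) < t := by exact_mod_cast ht
  have hN'N : N' ≤ N := by
    rw [hN']
    exact (Finset.card_filter_le _ _).trans (by simp)
  have htN' : t < N := by omega
  -- any old equality index is ≥ N - t + 1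
  have key : ∀ n : Fin N, (t : ℝ) * m n = t' → N - t + 1 ≤ (n : ℕ) := by
    intro n hn
    by_contra h
    push_neg at h
    have hsub : Finset.Ici n ⊆ Finset.univ.filter (fun k => (t : ℝ) * m k = t') := by
      intro k hk
      simp only [Finset.mem_Ici] at hk
      simp only [Finset.mem_filter, Finset.mem_univ, true_and]
      have h1 := hmono hk
      have h2 := hcond k
      nlinarith
    have hcard := Finset.card_le_card hsub
    rw [Fin.card_Ici] at hcard
    rw [← he] at hcard
    have hn2 : (n : ℕ) < N := n.isLt
    omega
  set ν : Fin N := ⟨N - t, by omega⟩ with hν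
  have hνval : (ν : ℕ) = N - t := rfl
  have hνnew : (t : ℝ) * m' ν = t'' := by
    rw [hm' ν, if_neg, ht'', hα]
    · field_simp
      ring
    · rw [hνval]
      omega
  have hνnotold : ¬ ((t : ℝ) * m ν = t') := by
    intro hc
    have := key ν hc
    rw [hνval] at this
    omega
  have hsub : insert ν (Finset.univ.filter (fun n => (t : ℝ) * m n = t')) ⊆
      Finset.univ.filter (fun n => (t : ℝ) * m' n = t'') := by
    intro n hn
    simp only [Finset.mem_insert, Finset.mem_filter, Finset.mem_univ, true_and] at hn ⊢
    rcases hn with rfl | hn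
    · exact hνnew
    · have hk := key n hn
      rw [hm' n, if_pos (Or.inr hk), ht'']
      linarith [hn]
  have hnotmem : ν ∉ Finset.univ.filter (fun n => (t : ℝ) * m n = t') := by
    simp only [Finset.mem_filter, Finset.mem_univ, true_and]
    exact hνnotold
  calc e + 1 = (insert ν (Finset.univ.filter (fun n => (t : ℝ) * m n = t'))).card := by
        rw [Finset.card_insert_of_notMem hnotmem, he]
    _ ≤ _ := Finset.card_le_card hsub
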